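/- No nontrivial element of N is finitary: if g is a nontrivial element of the subgroup N of G_A generated by {a⁻ⁿαaⁿ : n ∈ ℤ}, and (π₁, π₂, …) is the sequence of even permutations of X with g(x₁x₂x₃…) = π₁(x₁)π₂(x₂)π₃(x₃)…, then the set {i ∈ ℕ : πᵢ ≠ id} is infinite. -/

import Mathlib

/-!
We formalize the automaton `A` of the paper: alphabet `X = {1,2,3}` is encoded as
`Fin 3` (letter `i+1` ↦ `i`), states `a, b, c` are encoded as `0, 1, 2 : Fin 3`.
Each state induces a permutation of the space `ℕ → Fin 3` of infinite sequences.

Note on conventions: in the paper, products of tree automorphisms compose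
left-to-right (in a word `s₁s₂⋯sₙ`, the letter `s₁` acts first); in Mathlib,
`(f * g) w = f (g w)`, i.e. the right factor acts first.  Hence a paper word
`uv` is rendered as the Lean product `v * u`; e.g. the paper's `α = ab⁻¹`
(apply `a`, then `b⁻¹`) is `b⁻¹ * a` below.
-/

namespace Lamplighter

section Generic

variable {S X : Type*}

/-- The state of the automaton after reading the first `n` letters of `w`, starting at `s`. -/
def run (nxt : S → X → S) (s : S) (w : ℕ → X) : ℕ → S
  | 0 => s
  | n + 1 => nxt (run nxt s w n) (w n)

/-- The output sequence of the automaton started in state `s` reading `w`. -/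
def fwd (nxt : S → X → S) (out : S → Equiv.Perm X) (s : S) (w : ℕ → X) : ℕ → X :=
  fun n => out (run nxt s w n) (w n)

/-- Transition function of the inverse automaton. -/
def invNxt (nxt : S → X → S) (out : S → Equiv.Perm X) (s : S) (y : X) : S :=
  nxt s ((out s).symm y)

/-- The action of the inverse automaton, started at state `s`. -/
def bwd (nxt : S → X → S) (out : S → Equiv.Perm X) (s : S) (y : ℕ → X) : ℕ → X :=
  fun n => (out (run (invNxt nxt out) s y n)).symm (y n)

theorem run_inv_fwd (nxt : S → X → S) (out : S → Equiv.Perm X) (s : S) (w : ℕ → X) :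
    ∀ n, run (invNxt nxt out) s (fwd nxt out s w) n = run nxt s w n := by
  intro n
  induction n with
  | zero => rfl
  | succ n ih => simp [run, ih, invNxt, fwd]

theorem run_bwd (nxt : S → X → S) (out : S → Equiv.Perm X) (s : S) (y : ℕ → X) :
    ∀ n, run nxt s (bwd nxt out s y) n = run (invNxt nxt out) s y n := by
  intro n
  induction n with
  | zero => rfl
  | succ n ih => simp [run, ih, bwd, invNxt]

/-- The permutation of the space of infinite sequences induced by state `s`
of an invertible automaton. -/
def statePerm (nxt : S → X → S) (out : S → Equiv.Perm X) (s : S) : Equiv.Perm (ℕ → X) where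
  toFun := fwd nxt out s
  invFun := bwd nxt out s
  left_inv := fun w => funext fun n => by simp [bwd, run_inv_fwd, fwd]
  right_inv := fun y => funext fun n => by simp [fwd, run_bwd, bwd]

end Generic

/-- The alphabet `X = {1,2,3}`, encoded as `Fin 3`. -/
abbrev X3 := Fin 3

/-- Transition function of the automaton `A` (states `a = 0`, `b = 1`, `c = 2`):
from `a`: `1 ↦ a, 2 ↦ b, 3 ↦ c`; from `b`: `1 ↦ c, 2 ↦ a, 3 ↦ b`;
from `c`: `1 ↦ b, 2 ↦ c, 3 ↦ a`. -/
def nxtA : Fin 3 → X3 → Fin 3 := ![![0, 1, 2], ![2, 0, 1], ![1, 2, 0]]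

/-- Output permutations of the automaton `A`: state `a` acts on letters as the
transposition `(2 3)`, state `b` as `(1 3)`, state `c` as `(1 2)`. -/
def outA : Fin 3 → Equiv.Perm X3 := ![Equiv.swap 1 2, Equiv.swap 0 2, Equiv.swap 0 1]

/-- The permutation of `X^ℕ` given by state `a`. -/
def a : Equiv.Perm (ℕ → X3) := statePerm nxtA outA 0

/-- The permutation of `X^ℕ` given by state `b`. -/
def b : Equiv.Perm (ℕ → X3) := statePerm nxtA outA 1

/-- The permutation of `X^ℕ` given by state `c`. -/
def c : Equiv.Perm (ℕ → X3) := statePerm nxtA outA 2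

/-- The group `G_A` generated by the automaton `A`. -/
def GA : Subgroup (Equiv.Perm (ℕ → X3)) := Subgroup.closure {a, b, c}

/-- The element `α = ab⁻¹` of the paper (first apply `a`, then `b⁻¹`). -/
def α : Equiv.Perm (ℕ → X3) := b⁻¹ * a

/-- The set `W` of permutations acting coordinatewise by a sequence of even
permutations of the alphabet. -/
def W : Set (Equiv.Perm (ℕ → X3)) :=
  {g | ∃ π : ℕ → Equiv.Perm X3, (∀ n, Equiv.Perm.sign (π n) = 1) ∧
    ∀ (w : ℕ → X3) (n : ℕ), g w n = π n (w n)}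

/-- The subgroup `N` generated by the conjugates `a⁻ⁿ α aⁿ`, `n ∈ ℤ`
(in Lean's composition order: `aⁿ * α * a⁻ⁿ`). -/
def N : Subgroup (Equiv.Perm (ℕ → X3)) :=
  Subgroup.closure {g | ∃ n : ℤ, g = a ^ n * α * a ^ (-n)}


open Finset

lemma nxtA_eq (s x : ZMod 3) : nxtA s x = x - s := by revert s x; change ∀ s x : Fin 3, nxtA s x = (x - s : ZMod 3); decide
lemma outA_eq (s x : ZMod 3) : outA s x = -x - s := by revert s x; change ∀ s x : Fin 3, outA s x = (-x - s : ZMod 3); decide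

lemma h3 : (3 : ZMod 3) = 0 := by decide

/-- identity cast `X3 → ZMod 3` -/
def zc (x : X3) : ZMod 3 := x
/-- identity cast `ZMod 3 → X3` -/
def xc (x : ZMod 3) : X3 := x

lemma zinj : Function.Injective zc := fun _ _ h => h

/-- coordinatewise shift permutation -/
def ι (e : ℕ → ZMod 3) : Equiv.Perm (ℕ → X3) where
  toFun w := fun n => xc (zc (w n) + e n)
  invFun w := fun n => xc (zc (w n) - e n)
  left_inv w := funext fun n => zinj (by show (zc (w n) + e n) - e n = zc (w n); ring)
  right_inv w := funext fun n => zinj (by show (zc (w n) - e n) + e n = zc (w n); ring)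

lemma ι_apply (e : ℕ → ZMod 3) (w : ℕ → X3) (n : ℕ) :
    zc (ι e w n) = zc (w n) + e n := rfl

lemma ι_zero : ι 0 = 1 := by
  refine Equiv.ext fun w => funext fun n => zinj ?_
  show zc (w n) + (0 : ℕ → ZMod 3) n = zc (w n)
  simp

lemma ι_add (e f : ℕ → ZMod 3) : ι (e + f) = ι e * ι f := by
  refine Equiv.ext fun w => funext fun n => zinj ?_
  show zc (w n) + (e n + f n) = (zc (w n) + f n) + e n
  ring

lemma ι_eq_one_iff (e : ℕ → ZMod 3) : ι e = 1 ↔ e = 0 := by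
  constructor
  · intro h
    funext n
    have h4 := ι_apply e (fun _ => xc 0) n
    rw [h] at h4
    have h5 : (0 : ZMod 3) = 0 + e n := h4
    rw [zero_add] at h5
    exact h5.symm
  · rintro rfl; exact ι_zero

lemma ι_neg (e : ℕ → ZMod 3) : ι (-e) = (ι e)⁻¹ := by
  rw [eq_inv_iff_mul_eq_one, ← ι_add]
  simp [ι_zero]

lemma run_succ (s : Fin 3) (w : ℕ → X3) (n : ℕ) :
    zc (run nxtA s w (n+1)) = zc (w n) - zc (run nxtA s w n) := by
  show zc (nxtA (run nxtA s w n) (w n)) = _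
  exact nxtA_eq _ _

lemma a_apply (w : ℕ → X3) (n : ℕ) :
    zc (a w n) = -(zc (w n)) - zc (run nxtA 0 w n) := by
  show zc (outA (run nxtA 0 w n) (w n)) = _
  exact outA_eq _ _

lemma b_apply (w : ℕ → X3) (n : ℕ) :
    zc (b w n) = -(zc (w n)) - zc (run nxtA 1 w n) := by
  show zc (outA (run nxtA 1 w n) (w n)) = _
  exact outA_eq _ _

/-- the operator on shift sequences corresponding to conjugation `e ↦ a⁻¹ (ι e) a` -/
def Sop (e : ℕ → ZMod 3) : ℕ → ZMod 3 := fun n => (∑ k ∈ range n, e k) - e n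

lemma run_shift (e : ℕ → ZMod 3) (w : ℕ → X3) (n : ℕ) :
    zc (run nxtA 0 (fun k => xc (zc (w k) + Sop e k)) n)
      = zc (run nxtA 0 w n) - ∑ k ∈ range n, e k := by
  induction n with
  | zero => simp [run]
  | succ n ih =>
    rw [run_succ, run_succ, ih]
    show (zc (w n) + Sop e n) - _ = _
    rw [Sop, Finset.sum_range_succ]
    linear_combination (∑ k ∈ range n, e k) * h3

lemma conj_a (e : ℕ → ZMod 3) : ι e * a = a * ι (Sop e) := by
  refine Equiv.ext fun w => funext fun n => zinj ?_
  show zc (ι e (a w) n) = zc (a (ι (Sop e) w) n)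
  have hw : (ι (Sop e)) w = fun k => xc (zc (w k) + Sop e k) := rfl
  rw [ι_apply, hw, a_apply, a_apply, run_shift]
  show _ = -(zc (w n) + Sop e n) - _
  rw [Sop]
  ring

/-- the constant sequence 2, corresponding to `α` -/
def e₀ : ℕ → ZMod 3 := fun _ => 2

lemma run_shift2 (w : ℕ → X3) (n : ℕ) :
    zc (run nxtA 1 (fun k => xc (zc (w k) + e₀ k)) n) = zc (run nxtA 0 w n) + 1 := by
  induction n with
  | zero => rfl
  | succ n ih =>
    rw [run_succ, run_succ, ih]
    show (zc (w n) + e₀ n) - _ = _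
    show (zc (w n) + 2) - _ = _
    ring

lemma α_eq : α = ι e₀ := by
  have key : a = b * ι e₀ := by
    refine Equiv.ext fun w => funext fun n => zinj ?_
    have hw : (ι e₀) w = fun k => xc (zc (w k) + e₀ k) := rfl
    show zc (a w n) = zc (b (ι e₀ w) n)
    rw [a_apply, hw, b_apply, run_shift2]
    show _ = -(zc (w n) + e₀ n) - _
    show _ = -(zc (w n) + 2) - _
    linear_combination h3
  rw [α, key]
  group

/-- the recursion kernel for the inverse operator -/
def dd (e : ℕ → ZMod 3) : ℕ → ZMod 3
  | 0 => 0
  | n+1 => e n - dd e n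

/-- the operator on shift sequences corresponding to conjugation `e ↦ a (ι e) a⁻¹` -/
def Top (e : ℕ → ZMod 3) : ℕ → ZMod 3 := fun n => -e n - dd e n

lemma dd_S (e : ℕ → ZMod 3) (n : ℕ) :
    dd (Sop e) n = -∑ k ∈ Finset.range n, e k := by
  induction n with
  | zero => simp [dd]
  | succ n ih =>
    show Sop e n - dd (Sop e) n = _
    rw [ih, Sop, Finset.sum_range_succ]
    linear_combination (∑ k ∈ Finset.range n, e k) * h3

lemma T_S (e : ℕ → ZMod 3) : Top (Sop e) = e := by
  funext n
  show -Sop e n - dd (Sop e) n = e n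
  rw [dd_S, Sop]
  ring

lemma sum_dd (e : ℕ → ZMod 3) (n : ℕ) :
    ∑ k ∈ Finset.range n, (e k + dd e k) = dd e n := by
  induction n with
  | zero => simp [dd]
  | succ n ih =>
    rw [Finset.sum_range_succ, ih]
    show _ = e n - dd e n
    linear_combination (dd e n) * h3

lemma S_T (e : ℕ → ZMod 3) : Sop (Top e) = e := by
  funext n
  show (∑ k ∈ Finset.range n, (-e k - dd e k)) - (-e n - dd e n) = e n
  have : ∑ k ∈ Finset.range n, (-e k - dd e k) = -∑ k ∈ Finset.range n, (e k + dd e k) := by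
    rw [← Finset.sum_neg_distrib]
    exact Finset.sum_congr rfl fun k _ => by ring
  rw [this, sum_dd]
  ring

lemma Sop_add (e f : ℕ → ZMod 3) : Sop (e + f) = Sop e + Sop f := by
  funext n
  show (∑ k ∈ Finset.range n, (e k + f k)) - (e n + f n) = Sop e n + Sop f n
  rw [Finset.sum_add_distrib, Sop, Sop]
  ring

/-- `Sop` as an additive automorphism -/
def Saut : AddAut (ℕ → ZMod 3) where
  toFun := Sop
  invFun := Top
  left_inv := T_S
  right_inv := S_T
  map_add' := Sop_add

/-- the composition group structure on additive automorphisms -/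
instance : Group (AddAut (ℕ → ZMod 3)) where
  mul g h := AddEquiv.trans h g
  one := AddEquiv.refl _
  inv := AddEquiv.symm
  mul_assoc _ _ _ := rfl
  one_mul _ := rfl
  mul_one _ := rfl
  inv_mul_cancel := AddEquiv.self_trans_symm

lemma conj_a_inv (e : ℕ → ZMod 3) : a⁻¹ * ι e * a = ι (Saut e) := by
  have := conj_a e
  have h1 : a⁻¹ * (ι e * a) = a⁻¹ * (a * ι (Sop e)) := by rw [this]
  rw [← mul_assoc, ← mul_assoc, inv_mul_cancel, one_mul] at h1
  exact h1

lemma conj_a' (e : ℕ → ZMod 3) : a * ι e * a⁻¹ = ι (Saut⁻¹ e) := by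
  have := conj_a_inv (Saut⁻¹ e)
  rw [show Saut (Saut⁻¹ e) = e from Saut.apply_symm_apply e] at this
  rw [← this]
  group

lemma conj_one_apply (e : ℕ → ZMod 3) : MulAut.conj a (ι e) = ι (Saut⁻¹ e) := by
  rw [MulAut.conj_apply, conj_a']

lemma conj_inv_apply (e : ℕ → ZMod 3) : (MulAut.conj a)⁻¹ (ι e) = ι (Saut e) := by
  apply (MulAut.conj a).injective
  rw [conj_one_apply]
  have h1 : MulAut.conj a ((MulAut.conj a)⁻¹ (ι e)) = ι e := by
    rw [← MulAut.mul_apply, mul_inv_cancel, MulAut.one_apply]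
  rw [h1]
  congr 1
  exact (Saut.symm_apply_apply e).symm

lemma conj_zpow (m : ℤ) : ∀ e : ℕ → ZMod 3,
    ((MulAut.conj a) ^ m) (ι e) = ι ((Saut⁻¹ ^ m) e) := by
  induction m using Int.induction_on with
  | zero => intro e; simp; rfl
  | succ i ih =>
    intro e
    rw [zpow_add_one, zpow_add_one, MulAut.mul_apply, conj_one_apply, ih]
    rfl
  | pred i ih =>
    intro e
    rw [zpow_sub_one, zpow_sub_one, MulAut.mul_apply, conj_inv_apply, ih]
    have h2 : (Saut⁻¹ ^ (-(i:ℤ)) * Saut⁻¹⁻¹) e = (Saut⁻¹ ^ (-(i:ℤ))) (Saut⁻¹⁻¹ e) := rfl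
    rw [h2, inv_inv]

lemma generator_eq (n : ℤ) : a ^ n * α * a ^ (-n) = ι ((Saut ^ (-n)) e₀) := by
  have h1 : a ^ n * α * a ^ (-n) = MulAut.conj (a ^ n) (ι e₀) := by
    rw [MulAut.conj_apply, zpow_neg, α_eq]
  rw [h1, map_zpow, conj_zpow]
  congr 1
  rw [inv_zpow, ← zpow_neg]

/-- the family of shift sequences of the conjugates -/
def F (m : ℤ) : ℕ → ZMod 3 := (Saut ^ m) e₀

/-- the submodule of shift sequences corresponding to `N` -/
def Msub : Submodule (ZMod 3) (ℕ → ZMod 3) := Submodule.span (ZMod 3) (Set.range F)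

/-- the subgroup of coordinatewise shifts by elements of `Msub` -/
def H : Subgroup (Equiv.Perm (ℕ → X3)) where
  carrier := {g | ∃ e ∈ Msub, ι e = g}
  one_mem' := ⟨0, Submodule.zero_mem _, ι_zero⟩
  mul_mem' := by
    rintro g g' ⟨e, he, rfl⟩ ⟨f, hf, rfl⟩
    exact ⟨e + f, Submodule.add_mem _ he hf, ι_add e f⟩
  inv_mem' := by
    rintro g ⟨e, he, rfl⟩
    exact ⟨-e, Submodule.neg_mem _ he, ι_neg e⟩

lemma N_le_H : N ≤ H := by
  rw [N]
  apply Subgroup.closure_le _ |>.2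
  rintro g ⟨n, rfl⟩
  rw [generator_eq]
  exact ⟨F (-n), Submodule.subset_span ⟨-n, rfl⟩, rfl⟩

open Polynomial

/-- multiplication by `1 - t` on coefficient sequences -/
def uF (e : ℕ → ZMod 3) : ℕ → ZMod 3
  | 0 => e 0
  | n+1 => e (n+1) - e n

/-- multiplication by `1 + t` on coefficient sequences -/
def wF (e : ℕ → ZMod 3) : ℕ → ZMod 3
  | 0 => e 0
  | n+1 => e (n+1) + e n

/-- `uF` as a linear endomorphism -/
def uE : Module.End (ZMod 3) (ℕ → ZMod 3) where
  toFun := uF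
  map_add' e f := by funext n; cases n with
    | zero => rfl
    | succ n => show (e (n+1) + f (n+1)) - (e n + f n) = _; show _ = (e (n+1) - e n) + (f (n+1) - f n); ring
  map_smul' c e := by funext n; cases n with
    | zero => rfl
    | succ n => show c * e (n+1) - c * e n = c * (e (n+1) - e n); ring

/-- `wF` as a linear endomorphism -/
def wE : Module.End (ZMod 3) (ℕ → ZMod 3) where
  toFun := wF
  map_add' e f := by funext n; cases n with
    | zero => rfl
    | succ n => show (e (n+1) + f (n+1)) + (e n + f n) = _; show _ = (e (n+1) + e n) + (f (n+1) + f n); ring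
  map_smul' c e := by funext n; cases n with
    | zero => rfl
    | succ n => show c * e (n+1) + c * e n = c * (e (n+1) + e n); ring

lemma comm_uw : uE * wE = wE * uE := by
  apply LinearMap.ext
  intro e
  funext n
  show uF (wF e) n = wF (uF e) n
  match n with
  | 0 => rfl
  | 1 => show (e 1 + e 0) - e 0 = (e 1 - e 0) + e 0; ring
  | (n+2) =>
    show (e (n+2) + e (n+1)) - (e (n+1) + e n) = (e (n+2) - e (n+1)) + (e (n+1) - e n)
    ring

lemma swap_app (k : ℕ) (x : ℕ → ZMod 3) : uE ((wE ^ k) x) = (wE ^ k) (uE x) := by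
  have h := (Commute.pow_right (comm_uw) k)
  calc uE ((wE ^ k) x) = (uE * wE ^ k) x := rfl
    _ = (wE ^ k * uE) x := by rw [h]
    _ = (wE ^ k) (uE x) := rfl

/-- polynomial coefficients, as a sequence -/
def toSeq : Polynomial (ZMod 3) →ₗ[ZMod 3] (ℕ → ZMod 3) where
  toFun P := fun n => P.coeff n
  map_add' P Q := by funext n; simp
  map_smul' c P := by funext n; simp

lemma toSeq_inj : Function.Injective toSeq := by
  intro P Q h
  apply Polynomial.ext
  intro n
  exact congrFun h n

lemma uE_toSeq (P : Polynomial (ZMod 3)) : uE (toSeq P) = toSeq ((1 - X) * P) := by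
  have h : ∀ n, ((1-X)*P).coeff n = uF (fun i => P.coeff i) n := by
    intro n
    rw [sub_mul, one_mul]
    cases n with
    | zero => simp [uF, Polynomial.mul_coeff_zero]
    | succ n => simp [uF, Polynomial.coeff_X_mul]
  funext n
  exact (h n).symm

lemma wE_toSeq (P : Polynomial (ZMod 3)) : wE (toSeq P) = toSeq ((1 + X) * P) := by
  have h : ∀ n, ((1+X)*P).coeff n = wF (fun i => P.coeff i) n := by
    intro n
    rw [add_mul, one_mul]
    cases n with
    | zero => simp [wF, Polynomial.mul_coeff_zero]
    | succ n => simp [wF, Polynomial.coeff_X_mul]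
  funext n
  exact (h n).symm

lemma uE_pow_toSeq (j : ℕ) (P : Polynomial (ZMod 3)) :
    (uE ^ j) (toSeq P) = toSeq ((1 - X) ^ j * P) := by
  induction j generalizing P with
  | zero => simp
  | succ j ih =>
    rw [pow_succ, Module.End.mul_apply, uE_toSeq, ih, pow_succ]
    congr 1
    ring

lemma wE_pow_toSeq (k : ℕ) (P : Polynomial (ZMod 3)) :
    (wE ^ k) (toSeq P) = toSeq ((1 + X) ^ k * P) := by
  induction k generalizing P with
  | zero => simp
  | succ k ih =>
    rw [pow_succ, Module.End.mul_apply, wE_toSeq, ih, pow_succ]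
    congr 1
    ring

lemma uE_e₀ : uE e₀ = toSeq (C 2) := by
  funext n
  cases n with
  | zero => show (2 : ZMod 3) = (C (2:ZMod 3)).coeff 0; simp
  | succ n =>
    show (2 : ZMod 3) - 2 = (C (2:ZMod 3)).coeff (n+1)
    simp [Polynomial.coeff_C]

lemma rel (f : ℕ → ZMod 3) : uE (Sop f) = -(wE f) := by
  funext n
  show uF (Sop f) n = -(wF f n)
  cases n with
  | zero =>
    show Sop f 0 = -(f 0)
    show (∑ k ∈ Finset.range 0, f k) - f 0 = -(f 0)
    simp
  | succ n =>
    show Sop f (n+1) - Sop f n = -(f (n+1) + f n)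
    show ((∑ k ∈ Finset.range (n+1), f k) - f (n+1)) - ((∑ k ∈ Finset.range n, f k) - f n) = _
    rw [Finset.sum_range_succ]
    linear_combination f n * h3

lemma F_succ (m : ℤ) : F (m + 1) = Sop (F m) := by
  show (Saut ^ (m+1)) e₀ = _
  rw [show m + 1 = 1 + m by ring, zpow_one_add]
  rfl

lemma gen : ∀ (m : ℤ) (j k : ℕ), 0 ≤ m + k → m ≤ j →
    (uE ^ (j+1)) ((wE ^ k) (F m)) =
      toSeq (C ((-1 : ZMod 3)^((m+k).toNat + k) * 2) *
        ((1+X)^((m+k).toNat) * (1-X)^(((j:ℤ) - m).toNat))) := by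
  intro m
  induction m using Int.induction_on with
  | zero =>
    intro j k _ _
    have e1 : ((0:ℤ) + k).toNat = k := by omega
    have e2 : (((j:ℕ):ℤ) - 0).toNat = j := by omega
    rw [e1, e2]
    have hF : F 0 = e₀ := by show (Saut ^ (0:ℤ)) e₀ = e₀; rw [zpow_zero]; rfl
    rw [hF, pow_succ, Module.End.mul_apply, swap_app, uE_e₀, wE_pow_toSeq, uE_pow_toSeq]
    congr 1
    rw [show k + k = 2 * k by ring, pow_mul]
    simp only [neg_neg, one_mul, neg_mul, one_pow, map_mul, map_neg, map_pow, map_one, map_ofNat]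
    ring
  | succ i ih =>
    intro j k h0 h1
    obtain ⟨j', rfl⟩ : ∃ j', j = j' + 1 := ⟨j - 1, by omega⟩
    have step1 : (uE ^ (j'+1+1)) ((wE ^ k) (F ((i:ℤ)+1)))
        = - ((uE ^ (j'+1)) ((wE ^ (k+1)) (F i))) := by
      rw [pow_succ uE (j'+1), Module.End.mul_apply, swap_app, F_succ, rel,
        map_neg, map_neg]
      congr 2
    rw [step1, ih j' (k+1) (by omega) (by omega), ← map_neg]
    congr 1
    have e1 : ((i:ℤ) + ((k:ℕ)+1:ℕ)).toNat = i + k + 1 := by omega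
    have e2 : ((i:ℤ) + 1 + k).toNat = i + k + 1 := by omega
    have e3 : (((j':ℕ):ℤ) - i).toNat = (((j'+1:ℕ):ℤ) - ((i:ℤ)+1)).toNat := by omega
    rw [e1, e2, e3]
    have hsign : (-1 : ZMod 3)^(i+k+1+(k+1)) = -(-1 : ZMod 3)^(i+k+1+k) := by
      rw [show i+k+1+(k+1) = (i+k+1+k)+1 from rfl, pow_succ]; ring
    rw [hsign]
    simp only [map_mul, map_neg, map_pow, map_one, map_ofNat]
    ring
  | pred i ih =>
    intro j k h0 h1
    obtain ⟨k', rfl⟩ : ∃ k', k = k' + 1 := ⟨k - 1, by omega⟩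
    have key2 : wE (F (-(i:ℤ)-1)) = -(uE (F (-(i:ℤ)))) := by
      have hF : F (-(i:ℤ)) = Sop (F (-(i:ℤ)-1)) := by
        have h := F_succ (-(i:ℤ)-1)
        rw [show -(i:ℤ)-1+1 = -(i:ℤ) by ring] at h
        exact h
      rw [hF, rel, neg_neg]
    have step1 : (uE ^ (j+1)) ((wE ^ (k'+1)) (F (-(i:ℤ)-1)))
        = - ((uE ^ (j+1+1)) ((wE ^ k') (F (-(i:ℤ))))) := by
      rw [pow_succ wE k', Module.End.mul_apply, key2, map_neg, map_neg]
      congr 1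
      rw [pow_succ uE (j+1), Module.End.mul_apply, swap_app]
    rw [step1, ih (j+1) k' (by omega) (by omega), ← map_neg]
    congr 1
    have e1 : (-(i:ℤ) + k').toNat = (-(i:ℤ) - 1 + ((k':ℕ)+1:ℕ)).toNat := by omega
    have e2 : (((j+1:ℕ):ℤ) - (-(i:ℤ))).toNat = (((j:ℕ):ℤ) - (-(i:ℤ)-1)).toNat := by omega
    rw [← e1, ← e2]
    have hsign : (-1 : ZMod 3)^((-(i:ℤ) + k').toNat+(k'+1)) = -(-1 : ZMod 3)^((-(i:ℤ) + k').toNat+k') := by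
      rw [show (-(i:ℤ) + k').toNat+(k'+1) = ((-(i:ℤ) + k').toNat+k')+1 from rfl, pow_succ]; ring
    rw [hsign]
    simp only [map_mul, map_neg, map_pow, map_one, map_ofNat]
    ring

lemma core (e : ℕ → ZMod 3) (he : e ∈ Msub) (hne : e ≠ 0) : {n | e n ≠ 0}.Infinite := by
  by_contra hfin
  rw [Set.not_infinite] at hfin
  obtain ⟨c, hc⟩ := Finsupp.mem_span_range_iff_exists_finsupp.1 he
  have hc0 : c ≠ 0 := by
    rintro rfl
    apply hne
    rw [← hc]
    simp [Finsupp.sum]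
  have hsupp : c.support.Nonempty := Finsupp.support_nonempty_iff.2 hc0
  set lo := c.support.min' hsupp with hlo_def
  set hi := c.support.max' hsupp with hhi_def
  have hlohi : lo ≤ hi := Finset.min'_le _ _ (Finset.max'_mem _ hsupp)
  set A : ℕ := (-lo).toNat with hA_def
  set E : ℕ := (hi + A).toNat with hE_def
  set P : Polynomial (ZMod 3) := ∑ n ∈ hfin.toFinset, C (e n) * X ^ n with hP_def
  have htP : toSeq P = e := by
    funext n
    show P.coeff n = e n
    rw [hP_def, Polynomial.finset_sum_coeff]
    simp only [Polynomial.coeff_C_mul, Polynomial.coeff_X_pow]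
    rw [Finset.sum_eq_single n (fun b _ hb => by simp [Ne.symm hb]) (fun hn => by
      simp only [Set.Finite.mem_toFinset, Set.mem_setOf_eq, not_not] at hn
      simp [hn])]
    simp
  have hway1 : (uE ^ (E+1)) ((wE ^ A) e) = toSeq ((1-X)^(E+1) * ((1+X)^A * P)) := by
    rw [← htP, wE_pow_toSeq, uE_pow_toSeq]
  set R : Polynomial (ZMod 3) :=
    ∑ m ∈ c.support, C (c m) *
      (C ((-1 : ZMod 3)^((m+(A:ℤ)).toNat + A) * 2) *
        ((1+X)^((m+(A:ℤ)).toNat) * (1-X)^(((E:ℤ)-m).toNat))) with hR_def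
  have hway2 : (uE ^ (E+1)) ((wE ^ A) e) = toSeq R := by
    rw [← hc, Finsupp.sum, map_sum, map_sum, hR_def, map_sum]
    apply Finset.sum_congr rfl
    intro m hm
    have h1 : lo ≤ m := Finset.min'_le _ _ hm
    have h2 : m ≤ hi := Finset.le_max' _ _ hm
    rw [map_smul, map_smul, gen m E A (by omega) (by omega), ← map_smul]
    congr 1
    rw [smul_eq_C_mul]
  have hkey : (1-X)^(E+1) * ((1+X)^A * P) = R := toSeq_inj (hway1.symm.trans hway2)
  have hchi : c hi ≠ 0 := Finsupp.mem_support_iff.1 (Finset.max'_mem _ hsupp)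
  have hclo : c lo ≠ 0 := Finsupp.mem_support_iff.1 (Finset.min'_mem _ hsupp)
  -- the (1-X)-side
  set q1 : Polynomial (ZMod 3) := X - C 1 with hq1_def
  have hq1 : Prime q1 := Polynomial.prime_X_sub_C 1
  have h1X : ∀ n : ℕ, (1 - X : Polynomial (ZMod 3))^n = (-1)^n * q1^n := by
    intro n
    rw [hq1_def, Polynomial.C_1, ← neg_pow]
    ring_nf
  set G : Polynomial (ZMod 3) :=
    ∑ m ∈ c.support, C (c m) * (C ((-1 : ZMod 3)^((m+(A:ℤ)).toNat + A) * 2) *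
        ((1+X)^((m+(A:ℤ)).toNat) * (1-X)^((hi - m).toNat))) with hG_def
  have hfac1 : R = (1-X)^A * G := by
    rw [hR_def, hG_def, Finset.mul_sum]
    apply Finset.sum_congr rfl
    intro m hm
    have h2 : m ≤ hi := Finset.le_max' _ _ hm
    have hex : ((E:ℤ)-m).toNat = (hi - m).toNat + A := by omega
    rw [hex, pow_add]
    ring
  have hGe : G.eval 1 ≠ 0 := by
    rw [hG_def, Polynomial.eval_finset_sum]
    rw [Finset.sum_eq_single hi]
    · have hz : ((hi:ℤ) - hi).toNat = 0 := by omega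
      simp only [hz, Polynomial.eval_mul, Polynomial.eval_pow, Polynomial.eval_add,
        Polynomial.eval_sub, Polynomial.eval_one, Polynomial.eval_X, Polynomial.eval_C,
        pow_zero, sub_self, mul_one, Int.toNat_zero]
      exact mul_ne_zero hchi (mul_ne_zero (mul_ne_zero (pow_ne_zero _ (by decide)) (by decide))
        (pow_ne_zero _ (by decide)))
    · intro m hm hne'
      have h2 : m ≤ hi := Finset.le_max' _ _ hm
      have hz : (hi - m).toNat ≠ 0 := by
        have : m < hi := lt_of_le_of_ne h2 hne'
        omega
      simp only [Polynomial.eval_mul, Polynomial.eval_pow, Polynomial.eval_add,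
        Polynomial.eval_sub, Polynomial.eval_one, Polynomial.eval_X, Polynomial.eval_C,
        sub_self, zero_pow hz, mul_zero]
    · intro h; exact absurd (Finset.max'_mem _ hsupp) h
  have hdvd1 : q1^(E+1) ∣ ((-1 : Polynomial (ZMod 3))^A * G) * q1^A := by
    refine ⟨(-1)^(E+1) * ((1+X)^A * P), ?_⟩
    calc ((-1 : Polynomial (ZMod 3))^A * G) * q1^A = (1-X)^A * G := by rw [h1X A]; ring
    _ = R := hfac1.symm
    _ = (1-X)^(E+1) * ((1+X)^A * P) := hkey.symm
    _ = q1^(E+1) * ((-1)^(E+1) * ((1+X)^A * P)) := by rw [h1X (E+1)]; ring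
  have hnd1 : ¬ q1 ∣ ((-1 : Polynomial (ZMod 3))^A * G) := by
    rw [hq1_def, Polynomial.dvd_iff_isRoot]
    intro hroot
    rw [Polynomial.IsRoot, Polynomial.eval_mul, Polynomial.eval_pow, Polynomial.eval_neg,
      Polynomial.eval_one] at hroot
    rcases mul_eq_zero.1 hroot with h | h
    · exact pow_ne_zero _ (by decide : (-1 : ZMod 3) ≠ 0) h
    · exact hGe h
  have hle1 : E + 1 ≤ A := by
    have hd := Prime.pow_dvd_of_dvd_mul_left hq1 (E+1) hnd1 hdvd1
    exact (pow_dvd_pow_iff hq1.ne_zero hq1.not_unit).1 hd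
  -- the (1+X)-side
  set B : ℕ := (lo + (A:ℤ)).toNat with hB_def
  set q2 : Polynomial (ZMod 3) := X - C (-1) with hq2_def
  have hq2 : Prime q2 := Polynomial.prime_X_sub_C (-1)
  have h2X : (1 + X : Polynomial (ZMod 3)) = q2 := by rw [hq2_def, map_neg, Polynomial.C_1]; ring
  set H2 : Polynomial (ZMod 3) :=
    ∑ m ∈ c.support, C (c m) * (C ((-1 : ZMod 3)^((m+(A:ℤ)).toNat + A) * 2) *
        ((1+X)^((m - lo).toNat) * (1-X)^(((E:ℤ)-m).toNat))) with hH_def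
  have hfac2 : R = (1+X)^B * H2 := by
    rw [hR_def, hH_def, Finset.mul_sum]
    apply Finset.sum_congr rfl
    intro m hm
    have h1 : lo ≤ m := Finset.min'_le _ _ hm
    have hex : (m+(A:ℤ)).toNat = (m - lo).toNat + B := by omega
    rw [hex, pow_add]
    ring
  have hHe : H2.eval (-1) ≠ 0 := by
    rw [hH_def, Polynomial.eval_finset_sum]
    rw [Finset.sum_eq_single lo]
    · have hz : ((lo:ℤ) - lo).toNat = 0 := by omega
      simp only [hz, Polynomial.eval_mul, Polynomial.eval_pow, Polynomial.eval_add,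
        Polynomial.eval_sub, Polynomial.eval_one, Polynomial.eval_X, Polynomial.eval_C,
        pow_zero, add_neg_cancel, one_mul, Int.toNat_zero, mul_one]
      exact mul_ne_zero hclo (mul_ne_zero (mul_ne_zero (pow_ne_zero _ (by decide)) (by decide))
        (pow_ne_zero _ (by decide)))
    · intro m hm hne'
      have h1 : lo ≤ m := Finset.min'_le _ _ hm
      have hz : (m - lo).toNat ≠ 0 := by
        have : lo < m := lt_of_le_of_ne h1 (Ne.symm hne')
        omega
      simp only [Polynomial.eval_mul, Polynomial.eval_pow, Polynomial.eval_add,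
        Polynomial.eval_sub, Polynomial.eval_one, Polynomial.eval_X, Polynomial.eval_C,
        add_neg_cancel, zero_pow hz, zero_mul, mul_zero]
    · intro h; exact absurd (Finset.min'_mem _ hsupp) h
  have hdvd2 : q2^A ∣ H2 * q2^B := by
    refine ⟨(1-X)^(E+1) * P, ?_⟩
    calc H2 * q2^B = (1+X)^B * H2 := by rw [h2X]; ring
    _ = R := hfac2.symm
    _ = (1-X)^(E+1) * ((1+X)^A * P) := hkey.symm
    _ = q2^A * ((1-X)^(E+1) * P) := by rw [h2X]; ring
  have hnd2 : ¬ q2 ∣ H2 := by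
    rw [hq2_def, Polynomial.dvd_iff_isRoot]
    exact hHe
  have hle2 : A ≤ B := by
    have hd := Prime.pow_dvd_of_dvd_mul_left hq2 A hnd2 hdvd2
    exact (pow_dvd_pow_iff hq2.ne_zero hq2.not_unit).1 hd
  omega

/-- No nontrivial element of `N` is finitary: if `g ∈ N` is
nontrivial and `(π₁, π₂, …)` is a sequence of even permutations of the alphabet
with `g(x₁x₂…) = π₁(x₁)π₂(x₂)…`, then `πᵢ ≠ 1` for infinitely many `i`. -/
theorem N_not_finitary :
    ∀ g ∈ N, g ≠ 1 →
      ∀ π : ℕ → Equiv.Perm X3, (∀ n, Equiv.Perm.sign (π n) = 1) →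
        (∀ (w : ℕ → X3) (n : ℕ), g w n = π n (w n)) →
        {i : ℕ | π i ≠ 1}.Infinite := by
  intro g hg hg1 π _ hπ
  obtain ⟨e, heM, hge⟩ := N_le_H hg
  have he0 : e ≠ 0 := by
    rintro rfl
    apply hg1
    rw [← hge]
    exact ι_zero
  refine ((core e heM he0).mono ?_)
  intro n hn
  intro hone
  apply hn
  have h1 := hπ (fun _ => xc 0) n
  rw [hone, ← hge] at h1
  have h2 : zc (ι e (fun _ => xc 0) n) = e n := by
    rw [ι_apply]
    show (0 : ZMod 3) + e n = e n
    ring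
  rw [h1] at h2
  exact h2.symm.trans
    (show zc ((1 : Equiv.Perm X3) ((fun _ : ℕ => xc 0) n)) = 0 from rfl)

end Lamplighter
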